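/- In the SICRD model with r = μ = 1/20 and measurement y = I, if β p y(t)² ≠ 0 then C(t) = (10ÿy - 10ẏ² + 10βẏy² + 10qẏy + βy³ + qy²)/(10βpy²) evaluated at t. -/

import Mathlib

theorem sicrd_C_algebraically_observable
    (β p q : ℝ) (S I C : ℝ → ℝ)
    (hS : ∀ t, HasDerivAt S (-β * S t * I t - q * S t + p * C t) t)
    (hI : ∀ t, HasDerivAt I (β * S t * I t - (1 / 10) * I t) t)
    (hβ : β ≠ 0) (hp : p ≠ 0) (t : ℝ) (ht : I t ≠ 0) :
    C t = (10 * deriv (deriv I) t * I t - 10 * (deriv I t) ^ 2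
        + 10 * β * deriv I t * (I t) ^ 2 + 10 * q * deriv I t * I t
        + β * (I t) ^ 3 + q * (I t) ^ 2) / (10 * β * p * (I t) ^ 2) := by
  have hIderiv : deriv I = fun t => β * S t * I t - (1 / 10) * I t :=
    funext fun u => (hI u).deriv
  have hI2 : HasDerivAt (deriv I)
      (β * ((-β * S t * I t - q * S t + p * C t) * I t
        + S t * (β * S t * I t - (1 / 10) * I t))
        - (1 / 10) * (β * S t * I t - (1 / 10) * I t)) t := by
    rw [hIderiv]
    have := ((((hS t).mul (hI t)).const_mul β).sub ((hI t).const_mul (1/10)))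
    simpa [mul_assoc, Pi.sub_def] using this
  have h2 := hI2.deriv
  rw [h2, hIderiv]
  simp only
  field_simp
  ring
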